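/- Under the OCRDC recursion over an error-free channel with predictors satisfying Assumption 1 and target distortion D ∈ (0, D_max], the parameter sequence is uniformly bounded above: λ_t ≤ L/D + η(D_max − D) for all t ≥ 1. (Lemma 1) -/
import Mathlib


/-- **Lemma 1 (OCRDC parameter upper bound, error-free channel).**
Under the OCRDC recursion (slope `s t = max 0 (lam t)`, `X̃ t` a minimizer of
`−log p̂_t(x̃) + s_t d(X_t, x̃)`, update `lam (t+1) = lam t + η (d(X_t, X̃_t) − D)`)
with predictors satisfying Assumption 1 (`−log p̂_t(x) < L` for all `x`) and target
distortion `D ∈ (0, D_max]`, the parameter sequence satisfies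
`lam t ≤ L/D + η (D_max − D)` for all `t ≥ 1`. -/
theorem ocrdc_lambda_upper_bound
    {𝒳 : Type*} [Fintype 𝒳] [Nonempty 𝒳]
    (Dmax : ℝ) (hDmax : 0 < Dmax)
    (d : 𝒳 → 𝒳 → ℝ) (hd : ∀ x y, 0 ≤ d x y ∧ d x y ≤ Dmax) (hdd : ∀ x, d x x = 0)
    (X Xtil : ℕ → 𝒳) (p : ℕ → 𝒳 → ℝ)
    (hp : ∀ t x, 0 < p t x ∧ p t x ≤ 1) (hp1 : ∀ t, ∑ x, p t x = 1)
    (L : ℝ) (hL : ∀ t x, -Real.log (p t x) < L)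
    (D : ℝ) (hD : 0 < D ∧ D ≤ Dmax)
    (η : ℝ) (hη : 0 < η)
    (lam₀ : ℝ) (hlam₀ : 0 < lam₀ ∧ lam₀ ≤ L / D + η * (Dmax - D))
    (lam s : ℕ → ℝ) (hinit : lam 1 = lam₀)
    (hs : ∀ t, s t = max 0 (lam t))
    (hmin : ∀ t, 1 ≤ t → ∀ x,
      -Real.log (p t (Xtil t)) + s t * d (X t) (Xtil t)
        ≤ -Real.log (p t x) + s t * d (X t) x)
    (hupd : ∀ t, 1 ≤ t → lam (t + 1) = lam t + η * (d (X t) (Xtil t) - D)) :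
    ∀ t, 1 ≤ t → lam t ≤ L / D + η * (Dmax - D) := by
  obtain ⟨hD0, hDle⟩ := hD
  have hL0 : 0 < L := by
    have x := Classical.arbitrary 𝒳
    have h1 := (hp 0 x).1
    have h2 := Real.log_nonpos (le_of_lt h1) (hp 0 x).2
    have := hL 0 x
    linarith
  intro t ht
  induction t with
  | zero => omega
  | succ n ih =>
    rcases Nat.eq_or_lt_of_le ht with h1 | h1
    · rw [← h1, hinit]
      exact hlam₀.2
    · have hn : 1 ≤ n := by omega
      have ihn := ih hn
      by_cases hcase : lam n ≤ L / D
      · rw [hupd n hn]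
        have hdle : d (X n) (Xtil n) - D ≤ Dmax - D := by
          linarith [(hd (X n) (Xtil n)).2]
        nlinarith
      · push_neg at hcase
        have hsn : s n = lam n := by
          rw [hs]; exact max_eq_right (le_of_lt (lt_trans (div_pos hL0 hD0) hcase))
        have hspos : 0 < s n := by rw [hsn]; exact lt_trans (div_pos hL0 hD0) hcase
        have hmin' := hmin n hn (X n)
        rw [hdd] at hmin'
        have hnl : 0 ≤ -Real.log (p n (Xtil n)) := by
          have := (hp n (Xtil n))
          have : Real.log (p n (Xtil n)) ≤ 0 := Real.log_nonpos (le_of_lt this.1) this.2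
          linarith
        have hsd : s n * d (X n) (Xtil n) < L := by
          have := hL n (X n)
          nlinarith
        have hdlt : d (X n) (Xtil n) < D := by
          rw [hsn] at hsd hspos
          have hLD : L < lam n * D := (div_lt_iff₀ hD0).mp hcase
          nlinarith
        rw [hupd n hn]
        nlinarith
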